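/- Let A be a unital ℚ(r,q)-algebra with invertible T and E satisfying T - T^{-1} = (q - q^{-1})(1 - E), E² = xE where x = 1 + (r - r^{-1})/(q - q^{-1}), and ET = TE = r^{-1}E. Define Y(1) := (-1/[2])·(T - q + ((q - q^{-1})/(1 + r·q^{-1}))·E). Then Y(1) is idempotent: Y(1)² = Y(1). -/

import Mathlib

noncomputable section

/-- The field ℚ(r,q) of rational functions in two indeterminates over ℚ. -/
abbrev Krq : Type := RatFunc (RatFunc ℚ)

/-- The indeterminate q. -/
def q : Krq := RatFunc.C RatFunc.X

/-- The indeterminate r. -/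
def r : Krq := RatFunc.X

/-- The BMW parameter x = 1 + (r - r⁻¹)/(q - q⁻¹). -/
def x : Krq := 1 + (r - r⁻¹) / (q - q⁻¹)

/-- The quantum integer [2] = q + q⁻¹, as (q² - q⁻²)/(q - q⁻¹). -/
def qtwo : Krq := (q ^ 2 - q⁻¹ ^ 2) / (q - q⁻¹)

/-- Y(1) = (-1/[2])·(T - q + ((q - q⁻¹)/(1 + r·q⁻¹))·E). -/
def Yone {A : Type*} [Ring A] [Algebra Krq A] (T E : A) : A :=
  (-qtwo⁻¹) • (T - q • (1 : A) + ((q - q⁻¹) / (1 + r * q⁻¹)) • E)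

lemma X_inj {K : Type*} [Field K] : Function.Injective (RatFunc.C : K →+* RatFunc K) :=
  RatFunc.C_injective

lemma Xsq_ne_one : (RatFunc.X : RatFunc ℚ) ^ 2 ≠ 1 := by
  rw [← RatFunc.algebraMap_X (K := ℚ), ← map_pow,
    ← map_one (algebraMap (Polynomial ℚ) (RatFunc ℚ))]
  intro h
  have := congrArg (Polynomial.eval 0) (RatFunc.algebraMap_injective ℚ h)
  simp at this

lemma Xsq_ne_negone : (RatFunc.X : RatFunc ℚ) ^ 2 ≠ -1 := by
  rw [← RatFunc.algebraMap_X (K := ℚ), ← map_pow,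
    ← map_one (algebraMap (Polynomial ℚ) (RatFunc ℚ)), ← map_neg]
  intro h
  have := congrArg (Polynomial.eval 0) (RatFunc.algebraMap_injective ℚ h)
  simp at this

lemma hq0 : q ≠ 0 := by simp [q, RatFunc.X_ne_zero]

lemma hr0 : r ≠ 0 := RatFunc.X_ne_zero

lemma hq2 : q ^ 2 ≠ 1 := by
  simp only [q, ← map_pow, ← map_one (RatFunc.C (K := RatFunc ℚ))]
  exact fun h => Xsq_ne_one (X_inj h)

lemma hq2n : q ^ 2 + 1 ≠ 0 := by
  intro h
  have h2 : q ^ 2 = RatFunc.C (-1) := by rw [map_neg, map_one]; linear_combination h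
  rw [q, ← map_pow] at h2
  exact Xsq_ne_negone (X_inj h2)

lemma hqr : q + r ≠ 0 := by
  have heq : q + r
      = algebraMap (Polynomial (RatFunc ℚ)) Krq (Polynomial.C RatFunc.X + Polynomial.X) := by
    simp [q, r, RatFunc.algebraMap_C, RatFunc.algebraMap_X]
  rw [heq]
  intro h
  rw [← map_zero (algebraMap (Polynomial (RatFunc ℚ)) Krq)] at h
  have := congrArg (Polynomial.eval 0) (RatFunc.algebraMap_injective (RatFunc ℚ) h)
  simp [RatFunc.X_ne_zero] at this

lemma hd0 : q - q⁻¹ ≠ 0 := by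
  intro h
  apply hq2
  have h2 : (q - q⁻¹) * q = 0 := by rw [h]; ring
  have h3 : q ^ 2 - 1 = 0 := by
    rw [sub_mul, inv_mul_cancel₀ hq0] at h2
    linear_combination h2
  linear_combination h3

lemma hqtwo_eq : qtwo = q + q⁻¹ := by
  rw [qtwo, div_eq_iff hd0]
  field_simp
  ring

lemma hw0 : q + q⁻¹ ≠ 0 := by
  intro h
  apply hq2n
  have h2 : (q + q⁻¹) * q = 0 := by rw [h]; ring
  rw [add_mul, inv_mul_cancel₀ hq0] at h2
  linear_combination h2

lemma hqtwo0 : qtwo ≠ 0 := by rw [hqtwo_eq]; exact hw0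

lemma hden0 : 1 + r * q⁻¹ ≠ 0 := by
  intro h
  apply hqr
  have h2 : (1 + r * q⁻¹) * q = 0 := by rw [h]; ring
  rw [add_mul, one_mul, mul_assoc, inv_mul_cancel₀ hq0, mul_one] at h2
  linear_combination h2

lemma h1q2 : (1 : Krq) + q ^ 2 ≠ 0 := by
  intro h; exact hq2n (by linear_combination h)

lemma hq21 : q ^ 2 - 1 ≠ 0 := by
  intro h; exact hq2 (by linear_combination h)

lemma hsq1 : (1 + q ^ 2 * 2 + q ^ 4 : Krq) ≠ 0 := by
  have h : ((1 : Krq) + q ^ 2) ^ 2 ≠ 0 := pow_ne_zero _ h1q2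
  intro h2; exact h (by linear_combination h2)

lemma hsq2 : (q + q ^ 3 * 2 + q ^ 5 : Krq) ≠ 0 := by
  have h : q * ((1 : Krq) + q ^ 2) ^ 2 ≠ 0 := mul_ne_zero hq0 (pow_ne_zero _ h1q2)
  intro h2; exact h (by linear_combination h2)

lemma hqtwo_inv : qtwo⁻¹ = q / (1 + q ^ 2) := by
  rw [hqtwo_eq]
  rw [eq_div_iff h1q2, inv_mul_eq_div, div_eq_iff hw0]
  field_simp [hq0]
  ring

lemma hu_eq : (q - q⁻¹) / (1 + r * q⁻¹) = (q ^ 2 - 1) / (q + r) := by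
  rw [div_eq_div_iff hden0 hqr]
  linear_combination (-(1 + q * r)) * mul_inv_cancel₀ hq0

lemma hx_eq : x = 1 + q * (r ^ 2 - 1) / (r * (q ^ 2 - 1)) := by
  rw [x]
  congr 1
  rw [div_eq_div_iff hd0 (mul_ne_zero hr0 hq21)]
  linear_combination (r ^ 2 - 1) * mul_inv_cancel₀ hq0 -
    (q ^ 2 - 1) * mul_inv_cancel₀ hr0

lemma aux {K : Type*} [CommRing K] {A : Type*} [Ring A] [Algebra K A]
    (s t u d ri xx : K) (T E : A)
    (hT2 : T * T = 1 + d • T - (d * ri) • E)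
    (hE2 : E * E = xx • E) (hET : E * T = ri • E) (hTE : T * E = ri • E)
    (c1 : s * s + t * t = -t)
    (c2 : -(2 * s * t) + s * s * d = s)
    (c3 : 2 * s * u * ri - 2 * t * u + u * u * xx - s * s * (d * ri) = u) :
    (s • T - t • (1:A) + u • E) * (s • T - t • (1:A) + u • E)
      = s • T - t • (1:A) + u • E := by
  simp only [mul_add, add_mul, mul_sub, sub_mul, smul_mul_assoc, mul_smul_comm,
    smul_smul, mul_one, one_mul, hT2, hTE, hET, hE2]
  simp only [smul_add, smul_sub, smul_smul]
  match_scalars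
  · linear_combination c1
  · linear_combination c2
  · linear_combination c3

set_option maxHeartbeats 1600000 in
/-- If T (invertible) and E satisfy the single-index BMW relations, then Y(1)
is idempotent. -/
theorem yang_baxter_idempotent {A : Type*} [Ring A] [Algebra Krq A]
    (T Tinv E : A) (hTl : T * Tinv = 1) (hTr : Tinv * T = 1)
    (hquad : T - Tinv = (q - q⁻¹) • ((1 : A) - E))
    (hE2 : E * E = x • E)
    (hET : E * T = r⁻¹ • E) (hTE : T * E = r⁻¹ • E) :
    Yone T E * Yone T E = Yone T E := by
  have hquad' : Tinv = T - (q - q⁻¹) • ((1 : A) - E) := by rw [← hquad]; abel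
  have hT2 : T * T = 1 + (q - q⁻¹) • T - ((q - q⁻¹) * r⁻¹) • E := by
    have h1 := hTl
    rw [hquad', mul_sub, mul_smul_comm, mul_sub, mul_one, hTE, smul_sub, smul_smul] at h1
    have h2 := sub_eq_iff_eq_add.mp h1
    rw [h2]; abel
  have hYform : Yone T E
      = (-qtwo⁻¹) • T - (-qtwo⁻¹ * q) • (1 : A)
        + (-qtwo⁻¹ * ((q - q⁻¹) / (1 + r * q⁻¹))) • E := by
    simp only [Yone, smul_add, smul_sub, smul_smul]
  rw [hYform]
  apply aux _ _ _ _ _ _ T E hT2 hE2 hET hTE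
  · rw [hqtwo_inv]
    field_simp [hq0, h1q2]
  · rw [hqtwo_inv]
    field_simp [hq0, h1q2]
    ring
  · rw [hqtwo_inv, hu_eq, hx_eq]
    field_simp [hq0, hr0, h1q2, hq21, hqr]
    have hD1 : ((1 + q ^ 2) * ((1 + q ^ 2) * (q + r)) * r * ((1 + q ^ 2) * ((1 + q ^ 2) * (q + r))) : Krq) ≠ 0 := by
      apply_rules [mul_ne_zero, h1q2, hqr, hr0]
    have hD2 : ((1 + q ^ 2) * (q + r) * ((1 + q ^ 2) * (q + r)) * (r * (q ^ 2 - 1)) * ((1 + q ^ 2) * (1 + q ^ 2) * (q * r)) : Krq) ≠ 0 := by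
      apply_rules [mul_ne_zero, h1q2, hqr, hr0, hq0, hq21]
    ring
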